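/- Suppose a compact Hausdorff topological group G acts consistently on a compact Hausdorff projective family (X_S, p_{S S'}): each action G × X_S → X_S is continuous and the projections are equivariant, p_{S S'}(x_{S'} · g) = p_{S S'}(x_{S'}) · g. Let X̄ be the projective limit, on which G acts componentwise, and let X̄_G be the projective limit of the quotient family (X_S/G, with the induced projections). Then the natural map from the orbit space X̄/G (with the quotient topology) to X̄_G, sending the orbit of (x_S)_{S∈L} to the family ([x_S])_{S∈L} of orbits, is a homeomorphism. -/

import Mathlib

section Setup

variable {L : Type*} [PartialOrder L] (X : L → Type*)
  (p : ∀ S S', S ≤ S' → X S' → X S) {G : Type*} (a : ∀ S, X S → G → X S)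

/-- The projective limit of a projective family, as a subspace of the product space. -/
def ProjLim : Type _ :=
  {x : ∀ S, X S // ∀ S S' (h : S ≤ S'), p S S' h (x S') = x S}

/-- The Tychonov (subspace-of-product) topology on the projective limit. -/
instance [∀ S, TopologicalSpace (X S)] : TopologicalSpace (ProjLim X p) :=
  inferInstanceAs (TopologicalSpace {x : ∀ S, X S // ∀ S S' (h : S ≤ S'), p S S' h (x S') = x S})

/-- The orbit relation of the (right) `G`-action `a` on `X S`. -/
def OrbRel (S : L) : X S → X S → Prop := fun x y => ∃ g : G, a S x g = y

/-- The quotient `X S / G` of a member of the family by the group action,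
with the quotient topology. -/
def QuotFam (S : L) : Type _ := Quot (OrbRel X a S)

instance (S : L) [TopologicalSpace (X S)] : TopologicalSpace (QuotFam X a S) :=
  inferInstanceAs (TopologicalSpace (Quot (OrbRel X a S)))

/-- The projection `X S' / G → X S / G` induced by an equivariant projection `p`. -/
def QuotProj
    (hequiv : ∀ (S S' : L) (h : S ≤ S') (x : X S') (g : G),
      p S S' h (a S' x g) = a S (p S S' h x) g)
    (S S' : L) (h : S ≤ S') : QuotFam X a S' → QuotFam X a S :=
  Quot.lift (fun x => Quot.mk (OrbRel X a S) (p S S' h x))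
    (by rintro x y ⟨g, rfl⟩; exact Quot.sound ⟨g, (hequiv S S' h x g).symm⟩)

/-- The projective limit `X̄_G` of the quotient family `(X S / G)`. -/
def QuotFamLim
    (hequiv : ∀ (S S' : L) (h : S ≤ S') (x : X S') (g : G),
      p S S' h (a S' x g) = a S (p S S' h x) g) : Type _ :=
  {x : ∀ S, QuotFam X a S // ∀ S S' (h : S ≤ S'), QuotProj X p a hequiv S S' h (x S') = x S}

instance [∀ S, TopologicalSpace (X S)]
    (hequiv : ∀ (S S' : L) (h : S ≤ S') (x : X S') (g : G),
      p S S' h (a S' x g) = a S (p S S' h x) g) :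
    TopologicalSpace (QuotFamLim X p a hequiv) :=
  inferInstanceAs (TopologicalSpace
    {x : ∀ S, QuotFam X a S // ∀ S S' (h : S ≤ S'), QuotProj X p a hequiv S S' h (x S') = x S})

/-- The componentwise orbit relation of `G` on the projective limit `X̄`;
its quotient `Quot (LimOrbRel X p a)` is the orbit space `X̄/G` with the
quotient topology. -/
def LimOrbRel : ProjLim X p → ProjLim X p → Prop :=
  fun x y => ∃ g : G, ∀ S, a S (x.1 S) g = y.1 S

/-- The natural map `X̄/G → X̄_G`, sending the orbit of `(x_S)_S` to `([x_S])_S`. -/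
def NatMap
    (hequiv : ∀ (S S' : L) (h : S ≤ S') (x : X S') (g : G),
      p S S' h (a S' x g) = a S (p S S' h x) g) :
    Quot (LimOrbRel X p a) → QuotFamLim X p a hequiv :=
  Quot.lift
    (fun x => ⟨fun S => Quot.mk (OrbRel X a S) (x.1 S),
      fun S S' h => congrArg (Quot.mk (OrbRel X a S)) (x.2 S S' h)⟩)
    (by
      rintro x y ⟨g, hg⟩
      apply Subtype.ext
      funext S
      exact Quot.sound ⟨g, hg S⟩)

end Setup

section Aux

open Set

/-- Helper: the orbit equivalence relation of a group action is an equivalence. -/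
lemma orbit_rel_equivalence {Y : Type*} {G : Type*} [Group G]
    (b : Y → G → Y) (hone : ∀ y, b y 1 = y)
    (hmul : ∀ y g g', b (b y g) g' = b y (g * g')) :
    Equivalence (fun x y : Y => ∃ g : G, b x g = y) := by
  constructor
  · exact fun x => ⟨1, hone x⟩
  · rintro x y ⟨g, rfl⟩
    exact ⟨g⁻¹, by rw [hmul]; simp [hone]⟩
  · rintro x y z ⟨g, rfl⟩ ⟨g', rfl⟩
    exact ⟨g * g', (hmul x g g').symm⟩

/-- The quotient of a compact Hausdorff space by a continuous action of a compact
group is Hausdorff. -/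
lemma quot_orbit_t2 {Y : Type*} [TopologicalSpace Y] [CompactSpace Y] [T2Space Y]
    {G : Type*} [Group G] [TopologicalSpace G] [CompactSpace G]
    (b : Y → G → Y) (hb : Continuous fun q : Y × G => b q.1 q.2)
    (hone : ∀ y, b y 1 = y) (hmul : ∀ y g g', b (b y g) g' = b y (g * g')) :
    T2Space (Quot (fun x y : Y => ∃ g : G, b x g = y)) := by
  set r : Y → Y → Prop := fun x y => ∃ g : G, b x g = y with hr
  have hEq : Equivalence r := orbit_rel_equivalence b hone hmul
  have hbg : ∀ g : G, Continuous (fun x => b x g) := fun g =>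
    hb.comp (continuous_id.prodMk continuous_const)
  have hexact : ∀ {x y : Y}, Quot.mk r x = Quot.mk r y → r x y := fun h =>
    hEq.eqvGen_iff.mp (Quot.eqvGen_exact h)
  -- the quotient map is open
  have hopen : IsOpenMap (Quot.mk r) := by
    intro U hU
    rw [isOpen_coinduced]
    have hset : Quot.mk r ⁻¹' (Quot.mk r '' U) = ⋃ g : G, (fun x => b x g) ⁻¹' U := by
      ext x
      constructor
      · rintro ⟨y, hyU, hxy⟩
        obtain ⟨g, rfl⟩ := hexact hxy.symm
        exact mem_iUnion.mpr ⟨g, hyU⟩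
      · intro hx
        obtain ⟨g, hg⟩ := mem_iUnion.mp hx
        exact ⟨b x g, hg, (Quot.sound ⟨g, rfl⟩).symm⟩
    rw [hset]
    exact isOpen_iUnion fun g => (hbg g).isOpen_preimage U hU
  -- the orbit relation is closed
  have hRclosed : IsClosed {q : Y × Y | r q.1 q.2} := by
    have : {q : Y × Y | r q.1 q.2} = Set.range (fun w : Y × G => (w.1, b w.1 w.2)) := by
      ext q
      simp only [Set.mem_range, Set.mem_setOf_eq]
      constructor
      · rintro ⟨g, hg⟩; exact ⟨(q.1, g), Prod.ext rfl hg⟩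
      · rintro ⟨⟨x', g⟩, h⟩
        exact ⟨g, by rw [← h]⟩
    rw [this]
    exact (isCompact_range (continuous_fst.prodMk hb)).isClosed
  -- conclude T2
  rw [t2_iff_isClosed_diagonal, ← isOpen_compl_iff]
  have hdiag : (Set.diagonal (Quot r))ᶜ = Prod.map (Quot.mk r) (Quot.mk r) '' {q : Y × Y | r q.1 q.2}ᶜ := by
    ext ⟨u, v⟩
    constructor
    · intro huv
      obtain ⟨x, rfl⟩ := Quot.exists_rep u
      obtain ⟨y, rfl⟩ := Quot.exists_rep v
      exact ⟨(x, y), fun hrel => huv (Quot.sound hrel), rfl⟩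
    · rintro ⟨⟨x, y⟩, hxy, h⟩
      obtain ⟨h1, h2⟩ := Prod.mk.injEq .. ▸ h
      subst h1; subst h2
      exact fun hd => hxy (hexact hd)
  rw [hdiag]
  exact (hopen.prodMap hopen) _ hRclosed.isOpen_compl

end Aux

/-- If a compact Hausdorff topological group `G` acts consistently
(continuously and equivariantly) on a compact Hausdorff projective family, then the
natural map from the quotient `X̄/G` of the projective limit to the projective limit
`X̄_G` of the quotient family is a homeomorphism. -/
theorem quotient_of_limit_homeomorph_limit_of_quotients
    {L : Type*} [PartialOrder L] [IsDirected L (· ≤ ·)]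
    (X : L → Type*) [∀ S, TopologicalSpace (X S)]
    [∀ S, CompactSpace (X S)] [∀ S, T2Space (X S)] [∀ S, Nonempty (X S)]
    {G : Type*} [Group G] [TopologicalSpace G] [IsTopologicalGroup G]
    [CompactSpace G] [T2Space G]
    (p : ∀ S S', S ≤ S' → X S' → X S)
    (hp_cont : ∀ S S' (h : S ≤ S'), Continuous (p S S' h))
    (hp_surj : ∀ S S' (h : S ≤ S'), Function.Surjective (p S S' h))
    (hp_id : ∀ S, p S S le_rfl = id)
    (hp_comp : ∀ S S' S'' (h : S ≤ S') (h' : S' ≤ S''),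
      p S S' h ∘ p S' S'' h' = p S S'' (h.trans h'))
    (a : ∀ S, X S → G → X S)
    (ha_cont : ∀ S, Continuous fun q : X S × G => a S q.1 q.2)
    (ha_one : ∀ S x, a S x 1 = x)
    (ha_mul : ∀ (S : L) (x : X S) (g g' : G), a S (a S x g) g' = a S x (g * g'))
    (hequiv : ∀ (S S' : L) (h : S ≤ S') (x : X S') (g : G),
      p S S' h (a S' x g) = a S (p S S' h x) g) :
    IsHomeomorph (NatMap X p a hequiv) := by
  classical
  -- restate the relevant structures via their defining subtypes/quotients
  haveI hT2Q : ∀ S, T2Space (QuotFam X a S) := fun S =>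
    quot_orbit_t2 (a S) (ha_cont S) (ha_one S) (ha_mul S)
  haveI : T2Space (QuotFamLim X p a hequiv) :=
    inferInstanceAs (T2Space
      {x : ∀ S, QuotFam X a S // ∀ S S' (h : S ≤ S'), QuotProj X p a hequiv S S' h (x S') = x S})
  -- compactness of the projective limit
  have hclosed : IsClosed {x : ∀ S, X S | ∀ S S' (h : S ≤ S'), p S S' h (x S') = x S} := by
    have : {x : ∀ S, X S | ∀ S S' (h : S ≤ S'), p S S' h (x S') = x S} =
        ⋂ S, ⋂ S', ⋂ h : S ≤ S', {x : ∀ S, X S | p S S' h (x S') = x S} := by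
      ext x; simp [Set.mem_iInter]
    rw [this]
    exact isClosed_iInter fun S => isClosed_iInter fun S' => isClosed_iInter fun h =>
      isClosed_eq ((hp_cont S S' h).comp (continuous_apply S')) (continuous_apply S)
  haveI : CompactSpace (ProjLim X p) := isCompact_iff_compactSpace.mp hclosed.isCompact
  haveI : CompactSpace (Quot (LimOrbRel X p a)) := Quot.compactSpace
  rw [isHomeomorph_iff_continuous_bijective]
  constructor
  · -- continuity
    apply continuous_quot_lift
    refine Continuous.subtype_mk (continuous_pi fun S => ?_) _
    exact continuous_quot_mk.comp ((continuous_apply S).comp continuous_subtype_val)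
  constructor
  · -- injectivity
    have hEq : ∀ S, Equivalence (OrbRel X a S) := fun S =>
      orbit_rel_equivalence (a S) (ha_one S) (ha_mul S)
    intro q1 q2
    induction q1 using Quot.ind with | _ x =>
    induction q2 using Quot.ind with | _ y =>
    intro h
    have hS : ∀ S, Quot.mk (OrbRel X a S) (x.1 S) = Quot.mk (OrbRel X a S) (y.1 S) := by
      intro S
      exact congrFun (congrArg Subtype.val h) S
    have hrel : ∀ S, ∃ g : G, a S (x.1 S) g = y.1 S := fun S =>
      (hEq S).eqvGen_iff.mp (Quot.eqvGen_exact (hS S))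
    rcases isEmpty_or_nonempty L with hL | hL
    · exact Quot.sound ⟨1, fun S => isEmptyElim S⟩
    · -- find a single group element working for all S simultaneously
      set K : L → Set G := fun S => {g | a S (x.1 S) g = y.1 S} with hK
      have hKc : ∀ S, IsClosed (K S) := fun S =>
        isClosed_eq ((ha_cont S).comp (continuous_const.prodMk continuous_id)) continuous_const
      have hKmono : ∀ S S' (h : S ≤ S'), K S' ⊆ K S := by
        intro S S' hle g hg
        have := congrArg (p S S' hle) hg
        rw [hequiv S S' hle, x.2 S S' hle, y.2 S S' hle] at this
        exact this
      have hKd : Directed (· ⊇ ·) K := by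
        intro S S'
        obtain ⟨S'', h1, h2⟩ := directed_of (· ≤ ·) S S'
        exact ⟨S'', hKmono S S'' h1, hKmono S' S'' h2⟩
      obtain ⟨g, hg⟩ := IsCompact.nonempty_iInter_of_directed_nonempty_isCompact_isClosed K hKd
        (fun S => hrel S) (fun S => (hKc S).isCompact) hKc
      refine Quot.sound ⟨g, fun S => ?_⟩
      exact Set.mem_iInter.mp hg S
  · -- surjectivity
    rintro ⟨ξ, hξ⟩
    rcases isEmpty_or_nonempty L with hL | hL
    · exact ⟨Quot.mk _ ⟨fun S => isEmptyElim S, fun S => isEmptyElim S⟩,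
        Subtype.ext (funext fun S => isEmptyElim S)⟩
    · set Z : L → Set (∀ T, X T) := fun S =>
        {x | Quot.mk (OrbRel X a S) (x S) = ξ S ∧ ∀ T (h : T ≤ S), p T S h (x S) = x T} with hZ
      have hZc : ∀ S, IsClosed (Z S) := by
        intro S
        haveI : T2Space (Quot (OrbRel X a S)) := hT2Q S
        have : Z S = ((fun x : ∀ T, X T => Quot.mk (OrbRel X a S) (x S)) ⁻¹' {ξ S}) ∩
            ⋂ T, ⋂ h : T ≤ S, {x : ∀ T, X T | p T S h (x S) = x T} := by
          ext x; simp [hZ, Set.mem_iInter]; exact fun _ => Iff.rfl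
        rw [this]
        refine IsClosed.inter ?_ (isClosed_iInter fun T => isClosed_iInter fun h =>
          isClosed_eq ((hp_cont T S h).comp (continuous_apply S)) (continuous_apply T))
        exact IsClosed.preimage (continuous_quot_mk.comp (continuous_apply S))
          isClosed_singleton
      have hZn : ∀ S, (Z S).Nonempty := by
        intro S
        obtain ⟨rS, hrS⟩ := Quot.exists_rep (ξ S)
        refine ⟨fun T => if h : T ≤ S then p T S h rS else Classical.arbitrary _, ?_, ?_⟩
        · simpa [hp_id S] using hrS
        · intro T h
          simp only [dif_pos h, dif_pos (le_refl S), hp_id S, id]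
      have hZmono : ∀ S S' (h : S ≤ S'), Z S' ⊆ Z S := by
        intro S S' hle x ⟨hmk, hcmp⟩
        have hxS : p S S' hle (x S') = x S := hcmp S hle
        constructor
        · rw [← hxS, ← hξ S S' hle, ← hmk]
          rfl
        · intro T hT
          have h1 : p T S hT (x S) = p T S' (hT.trans hle) (x S') := by
            rw [← hxS, ← Function.comp_apply (f := p T S hT), hp_comp T S S' hT hle]
          rw [h1]
          exact hcmp T (hT.trans hle)
      have hZd : Directed (· ⊇ ·) Z := by
        intro S S'
        obtain ⟨S'', h1, h2⟩ := directed_of (· ≤ ·) S S'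
        exact ⟨S'', hZmono S S'' h1, hZmono S' S'' h2⟩
      obtain ⟨x, hx⟩ := IsCompact.nonempty_iInter_of_directed_nonempty_isCompact_isClosed Z hZd
        hZn (fun S => (hZc S).isCompact) hZc
      have hxmem : ∀ S, x ∈ Z S := fun S => Set.mem_iInter.mp hx S
      refine ⟨Quot.mk _ ⟨x, fun S S' h => (hxmem S').2 S h⟩, ?_⟩
      exact Subtype.ext (funext fun S => (hxmem S).1)
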